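/- Extended forward diamond for CCSK with replication: if X →[θ₁] X₁ →[θ₂] Y with θ₁ ⌣ θ₂ in CCSK extended with the replication operator, then there exist X₂ and labels θ̂₁, θ̂₂ with X →[θ̂₂] X₂ →[θ̂₁] Y and σ(θ̂ᵢ) = σ(θᵢ) for i ∈ {1,2}, where σ is the collapsing function identifying ! and |_R prefixes. -/
import Mathlib


namespace CCSK

/-- Labels: names, co-names, and the silent action τ. -/
inductive Lab : Type
  | name : ℕ → Lab
  | coname : ℕ → Lab
  | tau : Lab
deriving DecidableEq

/-- Complement of a label. -/
def Lab.co : Lab → Lab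
  | .name n => .coname n
  | .coname n => .name n
  | .tau => .tau

abbrev Key := ℕ

/-- CCSK processes (with a replication operator for the extended calculus). -/
inductive Proc : Type
  | nil : Proc
  | pre : Lab → Proc → Proc          -- α.X
  | kpre : Lab → Key → Proc → Proc   -- α[k].X
  | par : Proc → Proc → Proc
  | sum : Proc → Proc → Proc
  | res : Proc → ℕ → Proc            -- X \ a
  | repl : Proc → Proc               -- !X
deriving DecidableEq

/-- Keys occurring in a process. -/
def Proc.keys : Proc → Set Key
  | .nil => ∅
  | .pre _ X => X.keys
  | .kpre _ k X => insert k X.keys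
  | .par X Y => X.keys ∪ Y.keys
  | .sum X Y => X.keys ∪ Y.keys
  | .res X _ => X.keys
  | .repl X => X.keys

/-- A process is standard when it contains no keys. -/
def Proc.std (X : Proc) : Prop := X.keys = ∅

/-- Multiset of keyed-prefix occurrences (label, key). -/
def Proc.keyed : Proc → Multiset (Lab × Key)
  | .nil => 0
  | .pre _ X => X.keyed
  | .kpre a k X => (a, k) ::ₘ X.keyed
  | .par X Y => X.keyed + Y.keyed
  | .sum X Y => X.keyed + Y.keyed
  | .res X _ => X.keyed
  | .repl X => X.keyed

/-- Enhanced keyed labels. -/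
inductive ELab : Type
  | base : Lab → Key → ELab          -- α[k]
  | parL : ELab → ELab               -- |_L θ
  | parR : ELab → ELab               -- |_R θ
  | bang : ELab → ELab               -- !θ (replication)
  | syn : ELab → ELab → ELab         -- ⟨θ_L, θ_R⟩
deriving DecidableEq

/-- Underlying action label ℓ(θ). -/
def ELab.act : ELab → Lab
  | .base a _ => a
  | .parL θ => θ.act
  | .parR θ => θ.act
  | .bang θ => θ.act
  | .syn _ _ => .tau

/-- Key of an enhanced keyed label. -/
def ELab.key : ELab → Key
  | .base _ k => k
  | .parL θ => θ.key
  | .parR θ => θ.key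
  | .bang θ => θ.key
  | .syn θ _ => θ.key

/-- Dependency relation ⋖ on enhanced keyed labels (including the extension
for replication labels). -/
inductive Dep : ELab → ELab → Prop
  | base (a : Lab) (k : Key) (θ : ELab) : Dep (.base a k) θ
  | parL {θ θ'} : Dep θ θ' → Dep (.parL θ) (.parL θ')
  | parR {θ θ'} : Dep θ θ' → Dep (.parR θ) (.parR θ')
  | synSrcL {θL θR θ} : Dep θL θ → Dep (.syn θL θR) θ
  | synSrcR {θL θR θ} : Dep θR θ → Dep (.syn θL θR) θ
  | synTgtL {θ θL θR} : Dep θ θL → Dep θ (.syn θL θR)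
  | synTgtR {θ θL θR} : Dep θ θR → Dep θ (.syn θL θR)
  | synSynL {θL θR θL' θR'} : Dep θL θL' → Dep (.syn θL θR) (.syn θL' θR')
  | synSynR {θL θR θL' θR'} : Dep θR θR' → Dep (.syn θL θR) (.syn θL' θR')
  | bangBang (θ : ELab) : Dep (.bang θ) (.bang θ)
  | bangParL (θ θ' : ELab) : Dep (.bang θ) (.parL θ')
  | bangParRSynL (θL θR θ'' : ELab) : Dep (.bang (.syn θL θR)) (.parR (.parL θ''))
  | bangParRSynR (θL θR θ'' : ELab) : Dep (.bang (.syn θL θR)) (.parR (.parR θ''))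
  | bangParR {θ θ' : ELab} : Dep θ θ' → Dep (.bang θ) (.parR θ')

/-- Concurrency of labels: no dependency in either direction. -/
def Conc (θ₁ θ₂ : ELab) : Prop := ¬ Dep θ₁ θ₂ ∧ ¬ Dep θ₂ θ₁

/-- The proved forward LTS for CCSK (without replication rules). -/
inductive Fwd : Proc → ELab → Proc → Prop
  | act {a k X} : Proc.std X → Fwd (.pre a X) (.base a k) (.kpre a k X)
  | pre {a : Lab} {k : Key} {X X' : Proc} {θ : ELab} : Fwd X θ X' → θ.key ≠ k →
      Fwd (.kpre a k X) θ (.kpre a k X')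
  | res {X X' : Proc} {θ : ELab} {a : ℕ} : Fwd X θ X' → θ.act ≠ .name a → θ.act ≠ .coname a →
      Fwd (X.res a) θ (X'.res a)
  | parL {X X' Y : Proc} {θ : ELab} : Fwd X θ X' → θ.key ∉ Y.keys →
      Fwd (X.par Y) (.parL θ) (X'.par Y)
  | parR {Y Y' X : Proc} {θ : ELab} : Fwd Y θ Y' → θ.key ∉ X.keys →
      Fwd (X.par Y) (.parR θ) (X.par Y')
  | syn {X X' Y Y' : Proc} {θ₁ θ₂ : ELab} : Fwd X θ₁ X' → Fwd Y θ₂ Y' →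
      θ₁.act ≠ .tau → θ₂.act = θ₁.act.co → θ₂.key = θ₁.key →
      Fwd (X.par Y) (.syn (.parL θ₁) (.parR θ₂)) (X'.par Y')
  | sumL {X θ X' Y} : Fwd X θ X' → Proc.std Y → Fwd (X.sum Y) θ (X'.sum Y)
  | sumR {Y θ Y' X} : Fwd Y θ Y' → Proc.std X → Fwd (X.sum Y) θ (X.sum Y')

/-- The proved backward LTS for CCSK (exact symmetric of the forward one).
`Bwd X θ Y` means `X ⇝[θ] Y`. -/
inductive Bwd : Proc → ELab → Proc → Prop
  | act {a k X} : Proc.std X → Bwd (.kpre a k X) (.base a k) (.pre a X)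
  | pre {a : Lab} {k : Key} {X' X : Proc} {θ : ELab} : Bwd X' θ X → θ.key ≠ k →
      Bwd (.kpre a k X') θ (.kpre a k X)
  | res {X' X : Proc} {θ : ELab} {a : ℕ} : Bwd X' θ X → θ.act ≠ .name a → θ.act ≠ .coname a →
      Bwd (X'.res a) θ (X.res a)
  | parL {X' X Y : Proc} {θ : ELab} : Bwd X' θ X → θ.key ∉ Y.keys →
      Bwd (X'.par Y) (.parL θ) (X.par Y)
  | parR {Y' Y X : Proc} {θ : ELab} : Bwd Y' θ Y → θ.key ∉ X.keys →
      Bwd (X.par Y') (.parR θ) (X.par Y)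
  | syn {X' X Y' Y : Proc} {θ₁ θ₂ : ELab} : Bwd X' θ₁ X → Bwd Y' θ₂ Y →
      θ₁.act ≠ .tau → θ₂.act = θ₁.act.co → θ₂.key = θ₁.key →
      Bwd (X'.par Y') (.syn (.parL θ₁) (.parR θ₂)) (X.par Y)
  | sumL {X' θ X Y} : Bwd X' θ X → Proc.std Y → Bwd (X'.sum Y) θ (X.sum Y)
  | sumR {Y' θ Y X} : Bwd Y' θ Y → Proc.std X → Bwd (X.sum Y') θ (X.sum Y)

/-- Combined LTS: `Step true` is forward, `Step false` is backward. -/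
def Step : Bool → Proc → ELab → Proc → Prop
  | true => Fwd
  | false => Bwd

/-- Reachability: connected to a standard process by forward/backward moves. -/
def Reachable (X : Proc) : Prop :=
  ∃ X₀ : Proc, X₀.std ∧
    Relation.ReflTransGen (fun A B => ∃ d θ, Step d A θ B) X₀ X

/-- The proved forward LTS for CCSK extended with replication. -/
inductive FwdR : Proc → ELab → Proc → Prop
  | act {a k X} : Proc.std X → FwdR (.pre a X) (.base a k) (.kpre a k X)
  | pre {a : Lab} {k : Key} {X X' : Proc} {θ : ELab} : FwdR X θ X' → θ.key ≠ k →
      FwdR (.kpre a k X) θ (.kpre a k X')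
  | res {X X' : Proc} {θ : ELab} {a : ℕ} : FwdR X θ X' → θ.act ≠ .name a → θ.act ≠ .coname a →
      FwdR (X.res a) θ (X'.res a)
  | parL {X X' Y : Proc} {θ : ELab} : FwdR X θ X' → θ.key ∉ Y.keys →
      FwdR (X.par Y) (.parL θ) (X'.par Y)
  | parR {Y Y' X : Proc} {θ : ELab} : FwdR Y θ Y' → θ.key ∉ X.keys →
      FwdR (X.par Y) (.parR θ) (X.par Y')
  | syn {X X' Y Y' : Proc} {θ₁ θ₂ : ELab} : FwdR X θ₁ X' → FwdR Y θ₂ Y' →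
      θ₁.act ≠ .tau → θ₂.act = θ₁.act.co → θ₂.key = θ₁.key →
      FwdR (X.par Y) (.syn (.parL θ₁) (.parR θ₂)) (X'.par Y')
  | sumL {X θ X' Y} : FwdR X θ X' → Proc.std Y → FwdR (X.sum Y) θ (X'.sum Y)
  | sumR {Y θ Y' X} : FwdR Y θ Y' → Proc.std X → FwdR (X.sum Y) θ (X.sum Y')
  | repl1 {X X' : Proc} {θ : ELab} : FwdR X θ X' →
      FwdR (.repl X) (.bang θ) ((Proc.repl X).par X')
  | repl2 {X X' X'' : Proc} {θ₁ θ₂ : ELab} : FwdR X θ₁ X' → FwdR X θ₂ X'' →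
      θ₁.act ≠ .tau → θ₂.act = θ₁.act.co → θ₂.key = θ₁.key →
      FwdR (.repl X) (.bang (.syn (.parL θ₁) (.parR θ₂)))
        ((Proc.repl X).par (X'.par X''))

/-- The proved backward LTS for CCSK extended with replication. -/
inductive BwdR : Proc → ELab → Proc → Prop
  | act {a k X} : Proc.std X → BwdR (.kpre a k X) (.base a k) (.pre a X)
  | pre {a : Lab} {k : Key} {X' X : Proc} {θ : ELab} : BwdR X' θ X → θ.key ≠ k →
      BwdR (.kpre a k X') θ (.kpre a k X)
  | res {X' X : Proc} {θ : ELab} {a : ℕ} : BwdR X' θ X → θ.act ≠ .name a → θ.act ≠ .coname a →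
      BwdR (X'.res a) θ (X.res a)
  | parL {X' X Y : Proc} {θ : ELab} : BwdR X' θ X → θ.key ∉ Y.keys →
      BwdR (X'.par Y) (.parL θ) (X.par Y)
  | parR {Y' Y X : Proc} {θ : ELab} : BwdR Y' θ Y → θ.key ∉ X.keys →
      BwdR (X.par Y') (.parR θ) (X.par Y)
  | syn {X' X Y' Y : Proc} {θ₁ θ₂ : ELab} : BwdR X' θ₁ X → BwdR Y' θ₂ Y →
      θ₁.act ≠ .tau → θ₂.act = θ₁.act.co → θ₂.key = θ₁.key →
      BwdR (X'.par Y') (.syn (.parL θ₁) (.parR θ₂)) (X.par Y)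
  | sumL {X' θ X Y} : BwdR X' θ X → Proc.std Y → BwdR (X'.sum Y) θ (X.sum Y)
  | sumR {Y' θ Y X} : BwdR Y' θ Y → Proc.std X → BwdR (X.sum Y') θ (X.sum Y)
  | repl1 {X' X : Proc} {θ : ELab} : BwdR X' θ X →
      BwdR ((Proc.repl X).par X') (.bang θ) (.repl X)
  | repl2 {X' X'' X : Proc} {θ₁ θ₂ : ELab} : BwdR X' θ₁ X → BwdR X'' θ₂ X →
      θ₁.act ≠ .tau → θ₂.act = θ₁.act.co → θ₂.key = θ₁.key →
      BwdR ((Proc.repl X).par (X'.par X''))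
        (.bang (.syn (.parL θ₁) (.parR θ₂))) (.repl X)

/-- Combined extended LTS. -/
def StepR : Bool → Proc → ELab → Proc → Prop
  | true => FwdR
  | false => BwdR

/-- Reachability in the extended calculus. -/
def ReachableR (X : Proc) : Prop :=
  ∃ X₀ : Proc, X₀.std ∧
    Relation.ReflTransGen (fun A B => ∃ d θ, StepR d A θ B) X₀ X

/-- Traces: sequences of composable (forward or backward) transitions. -/
inductive Trace : Proc → Proc → Type
  | nil (X : Proc) : Trace X X
  | cons {X Y Z : Proc} (d : Bool) (θ : ELab) (s : Step d X θ Y)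
      (T : Trace Y Z) : Trace X Z

/-- Composition of traces. -/
def Trace.comp : {X Y Z : Proc} → Trace X Y → Trace Y Z → Trace X Z
  | _, _, _, .nil _, U => U
  | _, _, _, .cons d θ s T, U => .cons d θ s (Trace.comp T U)

/-- Length of a trace. -/
def Trace.length : {X Y : Proc} → Trace X Y → ℕ
  | _, _, .nil _ => 0
  | _, _, .cons _ _ _ T => Trace.length T + 1

/-- All transitions of a trace have direction `d`. -/
def Trace.AllDir (d : Bool) : {X Y : Proc} → Trace X Y → Prop
  | _, _, .nil _ => True
  | _, _, .cons d' _ _ T => d' = d ∧ Trace.AllDir d T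

/-- Causal equivalence of traces: the least equivalence relation, closed under
composition, cancelling a transition followed by its reverse, and swapping the
two sides of a concurrency square. -/
inductive CEq : {X Y : Proc} → Trace X Y → Trace X Y → Prop
  | refl {X Y} (T : Trace X Y) : CEq T T
  | symm {X Y} {T T' : Trace X Y} : CEq T T' → CEq T' T
  | trans {X Y} {T T' T'' : Trace X Y} : CEq T T' → CEq T' T'' → CEq T T''
  | congr {X Y Z : Proc} {d θ} (s : Step d X θ Y) {T T' : Trace Y Z} :
      CEq T T' → CEq (Trace.cons d θ s T) (Trace.cons d θ s T')
  | cancel {X Y Z : Proc} {d θ} (s : Step d X θ Y) (s' : Step (!d) Y θ X)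
      (T : Trace X Z) :
      CEq (Trace.cons d θ s (Trace.cons (!d) θ s' T)) T
  | square {X X₁ X₂ Y Z : Proc} {d₁ d₂ θ₁ θ₂}
      (s₁ : Step d₁ X θ₁ X₁) (t₂ : Step d₂ X₁ θ₂ Y)
      (s₂ : Step d₂ X θ₂ X₂) (t₁ : Step d₁ X₂ θ₁ Y)
      (hc : Conc θ₁ θ₂) (T : Trace Y Z) :
      CEq (Trace.cons d₁ θ₁ s₁ (Trace.cons d₂ θ₂ t₂ T))
          (Trace.cons d₂ θ₂ s₂ (Trace.cons d₁ θ₁ t₁ T))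

/-- Removal of the keyed prefix α[k]. -/
def remP (a : Lab) (k : Key) : Proc → Proc
  | .nil => .nil
  | .pre b X => .pre b X
  | .kpre b m X => if b = a ∧ m = k then X else .kpre b m (remP a k X)
  | .par X Y => .par (remP a k X) (remP a k Y)
  | .sum X Y => .sum (remP a k X) (remP a k Y)
  | .res X n => .res (remP a k X) n
  | .repl X => .repl (remP a k X)

/-- rem_k^α : remove α[k] and its complement (only α[k] when α = τ). -/
def remK (a : Lab) (k : Key) (X : Proc) : Proc :=
  if a = Lab.tau then remP a k X else remP a k (remP a.co k X)

/-- Left projection of enhanced keyed labels (partial). -/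
def projL : ELab → Option ELab
  | .parL θ => some θ
  | .syn (.parL θL) _ => some θL
  | _ => none

/-- Right projection of enhanced keyed labels (partial). -/
def projR : ELab → Option ELab
  | .parR θ => some θ
  | .syn _ (.parR θR) => some θR
  | _ => none

/-- Projection selector: `true` is left, `false` is right. -/
def eproj : Bool → ELab → Option ELab
  | true => projL
  | false => projR

/-- Component selector for parallel processes. -/
def side (b : Bool) (L R : Proc) : Proc := if b then L else R

/-- Labels of the shapes arising from a parallel composition. -/
def ParShape (θ : ELab) : Prop :=
  (∃ φ, θ = ELab.parL φ) ∨ (∃ φ, θ = ELab.parR φ) ∨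
    ∃ φ ψ, θ = ELab.syn (ELab.parL φ) (ELab.parR ψ)

/-- The collapsing function σ identifying ! and |_R prefixes. -/
def collapse : ELab → ELab
  | .base a k => .base a k
  | .parL θ => .parL (collapse θ)
  | .parR θ => .parR (collapse θ)
  | .bang θ => .parR (collapse θ)
  | .syn θ₁ θ₂ => .syn (collapse θ₁) (collapse θ₂)

/-- Sub-term relation: strips sums, restrictions and executed keyed prefixes.
`Strip X Y` means X is a sub-term of Y. -/
inductive Strip : Proc → Proc → Prop
  | refl (X : Proc) : Strip X X
  | sumL {X Y Z : Proc} : Strip X Y → Strip X (Y.sum Z)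
  | sumR {X Y Z : Proc} : Strip X Y → Strip X (Z.sum Y)
  | res {X Y : Proc} {a : ℕ} : Strip X Y → Strip X (Y.res a)
  | kpre {X Y : Proc} {a : Lab} {k : Key} : Strip X Y → Strip X (.kpre a k Y)

/-- A forward transition of the proved LTS, as an object. -/
structure FTrans where
  src : Proc
  lab : ELab
  tgt : Proc
  ok : Fwd src lab tgt

/-- A backward transition of the proved LTS, as an object. -/
structure BTrans where
  src : Proc
  lab : ELab
  tgt : Proc
  ok : Bwd src lab tgt

end CCSK

namespace CCSK

lemma collapse_act (θ : ELab) : (collapse θ).act = θ.act := by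
  induction θ <;> simp [collapse, ELab.act, *]

lemma collapse_key (θ : ELab) : (collapse θ).key = θ.key := by
  induction θ <;> simp [collapse, ELab.key, *]

lemma act_of_collapse {φ θ : ELab} (h : collapse φ = collapse θ) : φ.act = θ.act := by
  rw [← collapse_act φ, h, collapse_act]

lemma key_of_collapse {φ θ : ELab} (h : collapse φ = collapse θ) : φ.key = θ.key := by
  rw [← collapse_key φ, h, collapse_key]

lemma keys_stepR {X θ X'} (h : FwdR X θ X') : X'.keys = insert θ.key X.keys := by
  induction h with
  | act hstd => rw [Proc.std] at hstd; simp [Proc.keys, ELab.key, hstd]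
  | pre h hk ih => simp [Proc.keys, ih, Set.insert_comm]
  | res h _ _ ih => simp [Proc.keys, ih]
  | parL h hk ih => simp [Proc.keys, ELab.key, ih, Set.insert_union]
  | parR h hk ih => simp [Proc.keys, ELab.key, ih, Set.union_insert]
  | syn h1 h2 hτ hco hk ih1 ih2 =>
      simp [Proc.keys, ELab.key, ih1, ih2, hk, Set.insert_union, Set.union_insert]
  | sumL h _ ih => simp [Proc.keys, ih, Set.insert_union]
  | sumR h _ ih => simp [Proc.keys, ih, Set.union_insert]
  | repl1 h ih =>
      simp [Proc.keys, ELab.key, ih, Set.union_insert]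
  | repl2 h1 h2 hτ hco hk ih1 ih2 =>
      simp [Proc.keys, ELab.key, ih1, ih2, hk, Set.union_insert]

lemma key_freshR {X θ X'} (h : FwdR X θ X') : θ.key ∉ X.keys := by
  induction h with
  | act hstd => simp [Proc.keys, Proc.std] at *; simp [hstd]
  | pre h hk ih => simp [Proc.keys, ELab.key]; exact ⟨hk, ih⟩
  | res h _ _ ih => simpa [Proc.keys] using ih
  | parL h hk ih => simp [Proc.keys, ELab.key]; exact ⟨ih, hk⟩
  | parR h hk ih => simp [Proc.keys, ELab.key]; exact ⟨hk, ih⟩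
  | syn h1 h2 hτ hco hk ih1 ih2 =>
      simp [Proc.keys, ELab.key]; exact ⟨ih1, hk ▸ ih2⟩
  | sumL h hstd ih => simp [Proc.keys, Proc.std] at *; simp [ih, hstd]
  | sumR h hstd ih => simp [Proc.keys, Proc.std] at *; simp [ih, hstd]
  | repl1 h ih => simpa [Proc.keys, ELab.key] using ih
  | repl2 h1 h2 hτ hco hk ih1 ih2 => simpa [Proc.keys, ELab.key] using ih1

lemma key_memR {X θ X'} (h : FwdR X θ X') : θ.key ∈ X'.keys := by
  rw [keys_stepR h]; exact Set.mem_insert _ _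

lemma not_stdR {X θ X'} (h : FwdR X θ X') : ¬ X'.std := by
  rw [Proc.std, keys_stepR h]
  exact (Set.insert_nonempty _ _).ne_empty

lemma swapR {X X₁ Y : Proc} {θ₁ θ₂ : ELab}
    (h₁ : FwdR X θ₁ X₁) (h₂ : FwdR X₁ θ₂ Y) (hd : ¬ Dep θ₁ θ₂) :
    ∃ (X₂ : Proc) (φ₁ φ₂ : ELab),
      FwdR X φ₂ X₂ ∧ FwdR X₂ φ₁ Y ∧
      collapse φ₁ = collapse θ₁ ∧ collapse φ₂ = collapse θ₂ := by
  induction h₁ generalizing θ₂ Y with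
  | act _ => exact absurd (Dep.base _ _ _) hd
  | @pre a k Z Z' θ h hk ih =>
      cases h₂ with
      | pre h₂' hk₂ =>
          obtain ⟨Z₂, φ₁, φ₂, s1, s2, e1, e2⟩ := ih h₂' hd
          exact ⟨.kpre a k Z₂, φ₁, φ₂,
            .pre s1 (by rw [key_of_collapse e2]; exact hk₂),
            .pre s2 (by rw [key_of_collapse e1]; exact hk),
            e1, e2⟩
  | @res Z Z' θ a h hn hc ih =>
      cases h₂ with
      | res h₂' hn₂ hc₂ =>
          obtain ⟨Z₂, φ₁, φ₂, s1, s2, e1, e2⟩ := ih h₂' hd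
          exact ⟨.res Z₂ a, φ₁, φ₂,
            .res s1 (by rw [act_of_collapse e2]; exact hn₂)
                    (by rw [act_of_collapse e2]; exact hc₂),
            .res s2 (by rw [act_of_collapse e1]; exact hn)
                    (by rw [act_of_collapse e1]; exact hc),
            e1, e2⟩
  | @parL A A' B θ h hkB ih =>
      cases h₂ with
      | @parL _ A'' _ ψ h₂' hk₂ =>
          obtain ⟨A₂, φ₁, φ₂, s1, s2, e1, e2⟩ :=
            ih h₂' (fun d => hd (Dep.parL d))
          exact ⟨A₂.par B, .parL φ₁, .parL φ₂,
            .parL s1 (by rw [key_of_collapse e2]; exact hk₂),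
            .parL s2 (by rw [key_of_collapse e1]; exact hkB),
            by simp [collapse, e1], by simp [collapse, e2]⟩
      | @parR _ B' _ ψ h₂' hk₂ =>
          refine ⟨A.par B', .parL θ, .parR ψ,
            .parR h₂' (fun m => hk₂ (keys_stepR h ▸ Set.mem_insert_of_mem _ m)),
            .parL h ?_, rfl, rfl⟩
          rw [keys_stepR h₂']
          rintro (h' | m)
          · exact hk₂ (h' ▸ key_memR h)
          · exact hkB m
      | @syn _ A'' _ B' ψa ψb hx hy hτ hco hkk =>
          obtain ⟨A₂, φ₁, φ₂, s1, s2, e1, e2⟩ :=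
            ih hx (fun d => hd (Dep.synTgtL (Dep.parL d)))
          refine ⟨A₂.par B', .parL φ₁, .syn (.parL φ₂) (.parR ψb),
            .syn s1 hy (by rw [act_of_collapse e2]; exact hτ)
              (by rw [act_of_collapse e2]; exact hco)
              (by rw [key_of_collapse e2]; exact hkk),
            .parL s2 ?_, by simp [collapse, e1], by simp [collapse, e2]⟩
          rw [key_of_collapse e1, keys_stepR hy]
          rintro (h' | m)
          · exact key_freshR hx (by rw [← hkk, ← h']; exact key_memR h)
          · exact hkB m
  | @parR B B' A θ h hkA ih =>
      cases h₂ with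
      | @parR _ B'' _ ψ h₂' hk₂ =>
          obtain ⟨B₂, φ₁, φ₂, s1, s2, e1, e2⟩ :=
            ih h₂' (fun d => hd (Dep.parR d))
          exact ⟨A.par B₂, .parR φ₁, .parR φ₂,
            .parR s1 (by rw [key_of_collapse e2]; exact hk₂),
            .parR s2 (by rw [key_of_collapse e1]; exact hkA),
            by simp [collapse, e1], by simp [collapse, e2]⟩
      | @parL _ A' _ ψ h₂' hk₂ =>
          refine ⟨A'.par B, .parR θ, .parL ψ,
            .parL h₂' (fun m => hk₂ (keys_stepR h ▸ Set.mem_insert_of_mem _ m)),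
            .parR h ?_, rfl, rfl⟩
          rw [keys_stepR h₂']
          rintro (h' | m)
          · exact hk₂ (h' ▸ key_memR h)
          · exact hkA m
      | @syn _ A' _ B'' ψa ψb hx hy hτ hco hkk =>
          obtain ⟨B₂, φ₁, φ₂, s1, s2, e1, e2⟩ :=
            ih hy (fun d => hd (Dep.synTgtR (Dep.parR d)))
          refine ⟨A'.par B₂, .parR φ₁, .syn (.parL ψa) (.parR φ₂),
            .syn hx s1 hτ
              (by rw [act_of_collapse e2]; exact hco)
              (by rw [key_of_collapse e2]; exact hkk),
            .parR s2 ?_, by simp [collapse, e1], by simp [collapse, e2]⟩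
          rw [key_of_collapse e1, keys_stepR hx]
          rintro (h' | m)
          · exact key_freshR hy (by rw [hkk, ← h']; exact key_memR h)
          · exact hkA m
  | @syn A A' B B' α β hA hB hτ hco hkk ihA ihB =>
      cases h₂ with
      | @parL _ A'' _ ψ h₂' hk₂ =>
          obtain ⟨A₂, φ₁, φ₂, s1, s2, e1, e2⟩ :=
            ihA h₂' (fun d => hd (Dep.synSrcL (Dep.parL d)))
          refine ⟨A₂.par B, .syn (.parL φ₁) (.parR β), .parL φ₂,
            .parL s1 ?_,
            .syn s2 hB (by rw [act_of_collapse e1]; exact hτ)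
              (by rw [act_of_collapse e1]; exact hco)
              (by rw [key_of_collapse e1]; exact hkk),
            by simp [collapse, e1], by simp [collapse, e2]⟩
          rw [key_of_collapse e2]
          exact fun m => hk₂ (keys_stepR hB ▸ Set.mem_insert_of_mem _ m)
      | @parR _ B'' _ ψ h₂' hk₂ =>
          obtain ⟨B₂, φ₁, φ₂, s1, s2, e1, e2⟩ :=
            ihB h₂' (fun d => hd (Dep.synSrcR (Dep.parR d)))
          refine ⟨A.par B₂, .syn (.parL α) (.parR φ₁), .parR φ₂,
            .parR s1 ?_,
            .syn hA s2 hτ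
              (by rw [act_of_collapse e1]; exact hco)
              (by rw [key_of_collapse e1]; exact hkk),
            by simp [collapse, e1], by simp [collapse, e2]⟩
          rw [key_of_collapse e2]
          exact fun m => hk₂ (keys_stepR hA ▸ Set.mem_insert_of_mem _ m)
      | @syn _ A'' _ B'' ψa ψb hx hy hτ' hco' hkk' =>
          obtain ⟨A₂, φa1, φa2, sa1, sa2, ea1, ea2⟩ :=
            ihA hx (fun d => hd (Dep.synSynL (Dep.parL d)))
          obtain ⟨B₂, φb1, φb2, sb1, sb2, eb1, eb2⟩ :=
            ihB hy (fun d => hd (Dep.synSynR (Dep.parR d)))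
          exact ⟨A₂.par B₂, .syn (.parL φa1) (.parR φb1), .syn (.parL φa2) (.parR φb2),
            .syn sa1 sb1 (by rw [act_of_collapse ea2]; exact hτ')
              (by rw [act_of_collapse ea2, act_of_collapse eb2]; exact hco')
              (by rw [key_of_collapse ea2, key_of_collapse eb2]; exact hkk'),
            .syn sa2 sb2 (by rw [act_of_collapse ea1]; exact hτ)
              (by rw [act_of_collapse ea1, act_of_collapse eb1]; exact hco)
              (by rw [key_of_collapse ea1, key_of_collapse eb1]; exact hkk),
            by simp [collapse, ea1, eb1], by simp [collapse, ea2, eb2]⟩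
  | @sumL A θ A' B h hstd ih =>
      cases h₂ with
      | sumL h₂' hstd₂ =>
          obtain ⟨A₂, φ₁, φ₂, s1, s2, e1, e2⟩ := ih h₂' hd
          exact ⟨A₂.sum B, φ₁, φ₂, .sumL s1 hstd, .sumL s2 hstd, e1, e2⟩
      | sumR h₂' hstd₂ => exact absurd hstd₂ (not_stdR h)
  | @sumR B θ B' A h hstd ih =>
      cases h₂ with
      | sumR h₂' hstd₂ =>
          obtain ⟨B₂, φ₁, φ₂, s1, s2, e1, e2⟩ := ih h₂' hd
          exact ⟨A.sum B₂, φ₁, φ₂, .sumR s1 hstd, .sumR s2 hstd, e1, e2⟩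
      | sumL h₂' hstd₂ => exact absurd hstd₂ (not_stdR h)
  | @repl1 Z Z' θ h ih =>
      cases h₂ with
      | parL h₂' hk₂ => exact absurd (Dep.bangParL _ _) hd
      | @parR _ Z'' _ ψ h₂' hk₂ =>
          obtain ⟨Z₂, φ₁, φ₂, s1, s2, e1, e2⟩ :=
            ih h₂' (fun d => hd (Dep.bangParR d))
          exact ⟨(Proc.repl Z).par Z₂, .parR φ₁, .bang φ₂,
            .repl1 s1,
            .parR s2 (by rw [key_of_collapse e1]; exact fun m => key_freshR h m),
            by simp [collapse, e1], by simp [collapse, e2]⟩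
      | syn hx hy hτ hco hkk =>
          cases hx <;> exact absurd (Dep.synTgtL (Dep.bangParL _ _)) hd
  | @repl2 Z Z' Z'' α β h1 h2 hτ hco hkk ih1 ih2 =>
      cases h₂ with
      | parL h₂' hk₂ => exact absurd (Dep.bangParL _ _) hd
      | syn hx hy hτ' hco' hkk' =>
          cases hx <;> exact absurd (Dep.synTgtL (Dep.bangParL _ _)) hd
      | @parR _ W _ ψ h₂' hk₂ =>
          cases h₂' with
          | parL hx _ => exact absurd (Dep.bangParRSynL _ _ _) hd
          | parR hx _ => exact absurd (Dep.bangParRSynR _ _ _) hd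
          | @syn _ W' _ W'' ψa ψb hx hy hτ' hco' hkk' =>
              obtain ⟨Za, φa1, φa2, sa1, sa2, ea1, ea2⟩ :=
                ih1 hx (fun d => hd (Dep.bangParR (Dep.synSynL (Dep.parL d))))
              obtain ⟨Zb, φb1, φb2, sb1, sb2, eb1, eb2⟩ :=
                ih2 hy (fun d => hd (Dep.bangParR (Dep.synSynR (Dep.parR d))))
              refine ⟨(Proc.repl Z).par (Za.par Zb),
                .parR (.syn (.parL φa1) (.parR φb1)),
                .bang (.syn (.parL φa2) (.parR φb2)),
                .repl2 sa1 sb1 (by rw [act_of_collapse ea2]; exact hτ')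
                  (by rw [act_of_collapse ea2, act_of_collapse eb2]; exact hco')
                  (by rw [key_of_collapse ea2, key_of_collapse eb2]; exact hkk'),
                .parR (.syn sa2 sb2 (by rw [act_of_collapse ea1]; exact hτ)
                  (by rw [act_of_collapse ea1, act_of_collapse eb1]; exact hco)
                  (by rw [key_of_collapse ea1, key_of_collapse eb1]; exact hkk)) ?_,
                by simp [collapse, ea1, eb1], by simp [collapse, ea2, eb2]⟩
              show (ELab.syn (.parL φa1) (.parR φb1)).key ∉ (Proc.repl Z).keys
              have : (ELab.syn (.parL φa1) (.parR φb1)).key = α.key := by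
                simp [ELab.key, key_of_collapse ea1]
              rw [this]
              exact fun m => key_freshR h1 m

end CCSK

open CCSK in
/-- Extended forward diamond for CCSK with replication, up to the collapsing
function σ. -/
theorem forward_diamond_ext : ∀ (X X₁ Y : Proc) (θ₁ θ₂ : ELab),
    ReachableR X → FwdR X θ₁ X₁ → FwdR X₁ θ₂ Y → Conc θ₁ θ₂ →
    ∃ (X₂ : Proc) (φ₁ φ₂ : ELab),
      FwdR X φ₂ X₂ ∧ FwdR X₂ φ₁ Y ∧
      collapse φ₁ = collapse θ₁ ∧ collapse φ₂ = collapse θ₂ := by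
  intro X X₁ Y θ₁ θ₂ _ h₁ h₂ hc
  exact swapR h₁ h₂ hc.1
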